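/- Define the sequence (m_k) as follows: set d_1 := n_1 and d_k := n_k − n_{k-1} for k ≥ 2, choose positive integers (r_k) such that lim_{k→∞} (a_{n_k+1} + ⋯ + a_{n_{k+1}})/(r_k · (a_{n_{k-1}+1} + ⋯ + a_{n_k})) = 0, set n_0 := 0, and define m_{r_1 d_1 + ⋯ + r_{l-1} d_{l-1} + s d_l + p} := n_{l-1} + p for l ≥ 1, 0 ≤ s ≤ r_l − 1, 1 ≤ p ≤ d_l. Then this (m_k) satisfies: for any bounded-ratio sequence (b_n) (i.e. sup_n |b_n|/a_n < ∞) with lim_{k→∞} (b_{n_{k-1}+1}+⋯+b_{n_k})/(a_{n_{k-1}+1}+⋯+a_{n_k}) = α, one has lim_{k→∞} (b_{m_1}+⋯+b_{m_k})/(a_{m_1}+⋯+a_{m_k}) = α. -/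

import Mathlib

open Filter

private lemma sum_shift_aux (f : ℕ → ℝ) (m : ℕ → ℕ) (T c p : ℕ)
    (h : ∀ q, 1 ≤ q → q ≤ p → m (T + q) = c + q) :
    ∑ i ∈ Finset.Ioc T (T + p), f (m i) = ∑ i ∈ Finset.Ioc c (c + p), f i := by
  rw [show Finset.Ioc T (T+p) = Finset.map (addLeftEmbedding T) (Finset.Ioc 0 p) by
        rw [Finset.map_add_left_Ioc]; simp,
      show Finset.Ioc c (c+p) = Finset.map (addLeftEmbedding c) (Finset.Ioc 0 p) by
        rw [Finset.map_add_left_Ioc]; simp,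
      Finset.sum_map, Finset.sum_map]
  refine Finset.sum_congr rfl fun q hq => ?_
  simp only [Finset.mem_Ioc] at hq
  simp only [addLeftEmbedding_apply]
  rw [h q hq.1 hq.2]


private def NN (r n : ℕ → ℕ) (t : ℕ) : ℕ := ∑ j ∈ Finset.Icc 1 t, r j * (n j - n (j - 1))

private lemma NN_succ (r n : ℕ → ℕ) (t : ℕ) :
    NN r n (t + 1) = NN r n t + r (t + 1) * (n (t + 1) - n t) := by
  unfold NN
  rw [Finset.sum_Icc_succ_top (by omega)]
  simp

private lemma copies2 (n : ℕ → ℕ) (hmono : StrictMono n) (r m : ℕ → ℕ)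
    (hm : ∀ l, 1 ≤ l → ∀ s, s < r l → ∀ p, 1 ≤ p → p ≤ n l - n (l - 1) →
      m (NN r n (l - 1) + s * (n l - n (l - 1)) + p) = n (l - 1) + p)
    (f : ℕ → ℝ) (l : ℕ) (hl : 1 ≤ l) :
    ∀ s, s ≤ r l →
      ∑ i ∈ Finset.Ioc (NN r n (l-1)) (NN r n (l-1) + s * (n l - n (l-1))), f (m i)
        = s * ∑ i ∈ Finset.Ioc (n (l-1)) (n l), f i := by
  intro s hs
  induction s with
  | zero => simp
  | succ s ih =>
    have hsr : s < r l := by omega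
    have h1 : NN r n (l-1) ≤ NN r n (l-1) + s * (n l - n (l-1)) := Nat.le_add_right _ _
    have h2 : NN r n (l-1) + s * (n l - n (l-1)) ≤ NN r n (l-1) + (s+1) * (n l - n (l-1)) := by
      apply Nat.add_le_add_left
      exact Nat.mul_le_mul_right _ (by omega)
    rw [← Finset.sum_Ioc_consecutive (fun i => f (m i)) h1 h2, ih (by omega)]
    have heq : NN r n (l-1) + (s+1) * (n l - n (l-1))
        = (NN r n (l-1) + s * (n l - n (l-1))) + (n l - n (l-1)) := by ring
    rw [heq, sum_shift_aux f m _ (n (l-1)) _ (fun q hq1 hq2 => hm l hl s hsr q hq1 hq2)]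
    have hnl : n (l-1) + (n l - n (l-1)) = n l := by
      have := hmono (show l-1 < l by omega); omega
    rw [hnl]
    push_cast
    ring

private lemma totalsum (n : ℕ → ℕ) (hmono : StrictMono n) (r m : ℕ → ℕ)
    (hm : ∀ l, 1 ≤ l → ∀ s, s < r l → ∀ p, 1 ≤ p → p ≤ n l - n (l - 1) →
      m (NN r n (l - 1) + s * (n l - n (l - 1)) + p) = n (l - 1) + p)
    (f : ℕ → ℝ) (L : ℕ) :
    ∑ i ∈ Finset.Ioc 0 (NN r n L), f (m i)
      = ∑ j ∈ Finset.Icc 1 L, (r j : ℝ) * ∑ i ∈ Finset.Ioc (n (j-1)) (n j), f i := by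
  induction L with
  | zero => simp [NN]
  | succ L ih =>
    have h1 : NN r n L ≤ NN r n (L+1) := by rw [NN_succ]; omega
    rw [← Finset.sum_Ioc_consecutive (fun i => f (m i)) (Nat.zero_le _) h1, ih,
      Finset.sum_Icc_succ_top (by omega)]
    congr 1
    have hc := copies2 n hmono r m hm f (L+1) (by omega) (r (L+1)) le_rfl
    simp only [Nat.add_sub_cancel] at hc
    rw [NN_succ r n L]
    exact hc

private lemma master (n : ℕ → ℕ) (hmono : StrictMono n) (r m : ℕ → ℕ)
    (hm : ∀ l, 1 ≤ l → ∀ s, s < r l → ∀ p, 1 ≤ p → p ≤ n l - n (l - 1) →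
      m (NN r n (l - 1) + s * (n l - n (l - 1)) + p) = n (l - 1) + p)
    (f : ℕ → ℝ) (l : ℕ) (hl : 1 ≤ l) (s p : ℕ) (hs : s < r l) (hp1 : 1 ≤ p)
    (hp2 : p ≤ n l - n (l-1)) :
    ∑ i ∈ Finset.Icc 1 (NN r n (l-1) + s * (n l - n (l-1)) + p), f (m i)
      = (∑ j ∈ Finset.Icc 1 (l-1), (r j : ℝ) * ∑ i ∈ Finset.Ioc (n (j-1)) (n j), f i)
        + s * (∑ i ∈ Finset.Ioc (n (l-1)) (n l), f i)
        + ∑ i ∈ Finset.Ioc (n (l-1)) (n (l-1) + p), f i := by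
  rw [show Finset.Icc 1 (NN r n (l-1) + s * (n l - n (l-1)) + p)
      = Finset.Ioc 0 (NN r n (l-1) + s * (n l - n (l-1)) + p) from Finset.Icc_add_one_left_eq_Ioc 0 _]
  have h2 : NN r n (l-1) ≤ NN r n (l-1) + s * (n l - n (l-1)) := Nat.le_add_right _ _
  have h3 : NN r n (l-1) + s * (n l - n (l-1))
      ≤ NN r n (l-1) + s * (n l - n (l-1)) + p := Nat.le_add_right _ _
  rw [← Finset.sum_Ioc_consecutive (fun i => f (m i)) (Nat.zero_le _) (le_trans h2 h3),
    ← Finset.sum_Ioc_consecutive (fun i => f (m i)) h2 h3,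
    totalsum n hmono r m hm f (l-1), copies2 n hmono r m hm f l hl s (le_of_lt hs),
    sum_shift_aux f m _ (n (l-1)) p (fun q hq1 hq2 => hm l hl s hs q hq1 (le_trans hq2 hp2))]
  ring

set_option maxHeartbeats 2000000 in
theorem stmt_1 (a : ℕ → ℝ) (ha : ∃ ε > (0:ℝ), ∀ n, 1 ≤ n → ε ≤ a n)
    (n : ℕ → ℕ) (hn0 : n 0 = 0) (hmono : StrictMono n) :
    (∃ r : ℕ → ℕ, (∀ k, 1 ≤ r k) ∧
        Tendsto (fun k => (∑ i ∈ Finset.Ioc (n (k + 1)) (n (k + 2)), a i) /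
          ((r (k + 1) : ℝ) * ∑ i ∈ Finset.Ioc (n k) (n (k + 1)), a i)) atTop (nhds 0)) ∧
    ∀ r : ℕ → ℕ, (∀ k, 1 ≤ r k) →
      Tendsto (fun k => (∑ i ∈ Finset.Ioc (n (k + 1)) (n (k + 2)), a i) /
          ((r (k + 1) : ℝ) * ∑ i ∈ Finset.Ioc (n k) (n (k + 1)), a i)) atTop (nhds 0) →
      ∀ m : ℕ → ℕ,
        (∀ l, 1 ≤ l → ∀ s, s < r l → ∀ p, 1 ≤ p → p ≤ n l - n (l - 1) →
          m ((∑ j ∈ Finset.Icc 1 (l - 1), r j * (n j - n (j - 1))) + s * (n l - n (l - 1)) + p)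
            = n (l - 1) + p) →
        ∀ (b : ℕ → ℝ) (α : ℝ), (∃ M : ℝ, ∀ i, 1 ≤ i → |b i| ≤ M * a i) →
          Tendsto (fun k => (∑ i ∈ Finset.Ioc (n k) (n (k + 1)), b i) /
              (∑ i ∈ Finset.Ioc (n k) (n (k + 1)), a i)) atTop (nhds α) →
          Tendsto (fun k => (∑ i ∈ Finset.Icc 1 k, b (m i)) /
              (∑ i ∈ Finset.Icc 1 k, a (m i))) atTop (nhds α) := by
  obtain ⟨ε₀, hε₀, ha⟩ := ha
  -- block sums of a
  set A : ℕ → ℝ := fun j => ∑ i ∈ Finset.Ioc (n (j - 1)) (n j), a i with hA_def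
  have hnpos : ∀ j, 1 ≤ j → 1 ≤ n j := fun j hj => by
    have := hmono (show 0 < j from hj); omega
  have hanonneg : ∀ i, 1 ≤ i → (0:ℝ) ≤ a i := fun i hi => le_trans hε₀.le (ha i hi)
  have hAlb : ∀ j, 1 ≤ j → ε₀ ≤ A j := by
    intro j hj
    have hlt : n (j-1) < n j := hmono (by omega)
    have hmem : n j ∈ Finset.Ioc (n (j-1)) (n j) := Finset.mem_Ioc.2 ⟨hlt, le_rfl⟩
    calc ε₀ ≤ a (n j) := ha _ (hnpos j hj)
      _ ≤ A j := Finset.single_le_sum (fun i hi => hanonneg i (by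
            have := (Finset.mem_Ioc.1 hi).1; omega)) hmem
  have hApos : ∀ j, 1 ≤ j → (0:ℝ) < A j := fun j hj => lt_of_lt_of_le hε₀ (hAlb j hj)
  have hblk : ∀ k : ℕ, (∑ i ∈ Finset.Ioc (n k) (n (k+1)), a i) = A (k+1) := by
    intro k; simp [hA_def]
  constructor
  · -- existence of r
    set r0 : ℕ → ℕ := fun j => ⌈A (j+1) * ((j:ℝ)+1) / A j⌉₊ + 1 with hr0
    refine ⟨r0, fun k => le_add_self, ?_⟩
    have hlim : Tendsto (fun k : ℕ => 1 / ((k:ℝ) + 2)) atTop (nhds 0) := by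
      have h2 : Tendsto (fun k : ℕ => ((k:ℝ) + 2)) atTop atTop := by
        apply tendsto_atTop_add_const_right; exact tendsto_natCast_atTop_atTop
      exact h2.inv_tendsto_atTop.congr (fun k => (one_div _).symm)
    refine squeeze_zero (fun k => ?_) (fun k => ?_) hlim
    · have h1 : (0:ℝ) < A (k+1) := hApos _ (by omega)
      have h2 : (0:ℝ) < A (k+2) := hApos _ (by omega)
      rw [show (∑ i ∈ Finset.Ioc (n (k + 1)) (n (k + 2)), a i) = A (k+2) by simp [hA_def],
        hblk k]
      positivity
    · have h1 : (0:ℝ) < A (k+1) := hApos _ (by omega)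
      have h2 : (0:ℝ) < A (k+2) := hApos _ (by omega)
      rw [show (∑ i ∈ Finset.Ioc (n (k + 1)) (n (k + 2)), a i) = A (k+2) by simp [hA_def],
        hblk k]
      have hx : A (k+2) * ((k:ℝ)+2) / A (k+1) ≤ (r0 (k+1) : ℝ) := by
        have h := Nat.le_ceil (A (k+2) * ((k:ℝ)+2) / A (k+1))
        have heq : A (k+1+1) * (((k+1:ℕ):ℝ)+1) / A (k+1) = A (k+2) * ((k:ℝ)+2) / A (k+1) := by
          push_cast; ring_nf
        rw [hr0]
        simp only [heq]
        push_cast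
        linarith [h]
      have hrpos : (0:ℝ) < (r0 (k+1) : ℝ) := by positivity
      rw [div_le_div_iff₀ (by positivity) (by positivity)]
      have h3 := (div_le_iff₀ h1).1 hx
      nlinarith [mul_pos hrpos h1]
  · -- main resequencing property
    intro r hr hr2 m hm b α hbdd htb
    obtain ⟨M, hM⟩ := hbdd
    set M' : ℝ := max M 0 with hM'def
    have hM' : ∀ i, 1 ≤ i → |b i| ≤ M' * a i := fun i hi =>
      le_trans (hM i hi) (mul_le_mul_of_nonneg_right (le_max_left _ _) (hanonneg i hi))
    have hM'0 : (0:ℝ) ≤ M' := le_max_right _ _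
    have hm' : ∀ l, 1 ≤ l → ∀ s, s < r l → ∀ p, 1 ≤ p → p ≤ n l - n (l - 1) →
        m (NN r n (l - 1) + s * (n l - n (l - 1)) + p) = n (l - 1) + p := hm
    set B : ℕ → ℝ := fun j => ∑ i ∈ Finset.Ioc (n (j - 1)) (n j), b i with hB_def
    have hfold : ∀ j : ℕ, (∑ i ∈ Finset.Ioc (n (j-1)) (n j), a i) = A j := fun j => rfl
    have hfoldb : ∀ j : ℕ, (∑ i ∈ Finset.Ioc (n (j-1)) (n j), b i) = B j := fun j => rfl
    have hD : ∀ l, 1 ≤ l → 1 ≤ n l - n (l-1) := fun l hl => by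
      have := hmono (show l-1 < l by omega); omega
    have hNmono : ∀ t t', t ≤ t' → NN r n t ≤ NN r n t' := fun t t' h =>
      Finset.sum_le_sum_of_subset (Finset.Icc_subset_Icc_right h)
    have hNge : ∀ t, t ≤ NN r n t := by
      intro t
      induction t with
      | zero => omega
      | succ t ih =>
        rw [NN_succ]
        have h1 := hr (t+1)
        have h2 := hD (t+1) (by omega)
        simp only [Nat.add_sub_cancel] at h2
        have := Nat.mul_le_mul h1 h2
        omega
    have hrep : ∀ k, 1 ≤ k → ∃ l s p, 1 ≤ l ∧ s < r l ∧ 1 ≤ p ∧ p ≤ n l - n (l-1) ∧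
        k = NN r n (l-1) + s * (n l - n (l-1)) + p ∧ k ≤ NN r n l := by
      intro k hk
      have hex : ∃ l, k ≤ NN r n l := ⟨k, hNge k⟩
      classical
      set l := Nat.find hex with hl_def
      have hkl : k ≤ NN r n l := Nat.find_spec hex
      have hl1 : 1 ≤ l := by
        rcases Nat.eq_zero_or_pos l with h | h
        · exfalso; rw [h] at hkl; simp [NN] at hkl; omega
        · exact h
      have hlt : NN r n (l-1) < k := by
        by_contra h
        push_neg at h
        exact Nat.find_min hex (show l-1 < l by omega) h
      have hNsucc : NN r n l = NN r n (l-1) + r l * (n l - n (l-1)) := by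
        have := NN_succ r n (l-1)
        rw [show l - 1 + 1 = l from by omega] at this
        rw [this]
      have hd : 0 < n l - n (l-1) := hD l hl1
      set q := k - NN r n (l-1) with hq_def
      have hq1 : 1 ≤ q := by omega
      have hq2 : q ≤ r l * (n l - n (l-1)) := by omega
      refine ⟨l, (q-1) / (n l - n (l-1)), (q-1) % (n l - n (l-1)) + 1, hl1, ?_, by omega,
        ?_, ?_, hkl⟩
      · rw [Nat.div_lt_iff_lt_mul hd]
        calc q - 1 < q := by omega
          _ ≤ r l * (n l - n (l-1)) := hq2
      · have := Nat.mod_lt (q-1) hd; omega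
      · have hdm := Nat.div_add_mod (q-1) (n l - n (l-1))
        have hcomm : (q-1) / (n l - n (l-1)) * (n l - n (l-1))
            = (n l - n (l-1)) * ((q-1) / (n l - n (l-1))) := Nat.mul_comm _ _
        omega
    have hm1 : ∀ i, 1 ≤ i → 1 ≤ m i := by
      intro i hi
      obtain ⟨l', s', p', h1, h2, h3, h4, h5, _⟩ := hrep i hi
      rw [h5, hm' l' h1 s' h2 p' h3 h4]
      omega
    -- eventual estimates
    rw [Metric.tendsto_atTop]
    intro ε hε
    have hε' : (0:ℝ) < ε/3 := by linarith
    obtain ⟨J1, hJ1⟩ := Metric.tendsto_atTop.1 htb (ε/3) hε'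
    have hΔ : ∀ j, J1 + 1 ≤ j → |B j - α * A j| ≤ ε/3 * A j := by
      intro j hj
      have hj1 : 1 ≤ j := by omega
      have hA := hApos j hj1
      have h : |(∑ i ∈ Finset.Ioc (n (j-1)) (n (j-1+1)), b i) /
          (∑ i ∈ Finset.Ioc (n (j-1)) (n (j-1+1)), a i) - α| < ε/3 := by
        simpa [Real.dist_eq] using hJ1 (j-1) (by omega)
      rw [show j - 1 + 1 = j from by omega, hfold, hfoldb] at h
      have hBA : B j - α * A j = (B j / A j - α) * A j := by field_simp
      rw [hBA, abs_mul, abs_of_pos hA]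
      exact mul_le_mul_of_nonneg_right h.le hA.le
    have hc : (0:ℝ) < (ε/3)/(M' + |α| + 1) := by positivity
    obtain ⟨J2, hJ2⟩ := Metric.tendsto_atTop.1 hr2 ((ε/3)/(M' + |α| + 1)) hc
    have hsm : ∀ lq, J2 + 2 ≤ lq → (M' + |α|) * A lq ≤ ε/3 * ((r (lq-1) : ℝ) * A (lq-1)) := by
      intro lq hlq
      have h := hJ2 (lq-2) (by omega)
      simp only [Real.dist_eq, sub_zero] at h
      rw [show lq - 2 + 1 = lq - 1 from by omega,
        show lq - 2 + 2 = lq from by omega] at h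
      have hA1 : (0:ℝ) < A (lq-1) := hApos _ (by omega)
      have hA2 : (0:ℝ) < A lq := hApos _ (by omega)
      have hrpos : (0:ℝ) < (r (lq-1) : ℝ) := by exact_mod_cast hr (lq-1)
      have hs1 : (∑ i ∈ Finset.Ioc (n (lq-2)) (n (lq-1)), a i) = A (lq-1) := by
        rw [← hfold (lq-1), show lq - 1 - 1 = lq - 2 from by omega]
      have hs2 : (∑ i ∈ Finset.Ioc (n (lq-1)) (n lq), a i) = A lq := hfold lq
      rw [hs1, hs2, abs_of_pos (by positivity)] at h
      have hlt : A lq < (ε/3)/(M' + |α| + 1) * ((r (lq-1) : ℝ) * A (lq-1)) := by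
        rw [div_lt_iff₀ (by positivity)] at h
        linarith
      have hkey : (M' + |α|) * ((ε/3)/(M' + |α| + 1)) ≤ ε/3 := by
        rw [mul_div_assoc']
        rw [div_le_iff₀ (by positivity)]
        have : (0:ℝ) ≤ |α| := abs_nonneg α
        nlinarith
      nlinarith [mul_pos hrpos hA1, abs_nonneg α]
    -- choose constants
    set L0 : ℕ := max (J1 + 2) (J2 + 2) with hL0_def
    set C : ℝ := ∑ j ∈ Finset.Icc 1 (L0-1), (r j : ℝ) * |B j - α * A j| with hC_def
    have hC0 : (0:ℝ) ≤ C :=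
      Finset.sum_nonneg fun j _ => mul_nonneg (Nat.cast_nonneg _) (abs_nonneg _)
    refine ⟨max (NN r n (L0-1) + 1) (⌈C/(ε₀*(ε/3))⌉₊ + 1), fun k hk => ?_⟩
    have hk1 : 1 ≤ k := le_trans (by omega) (le_trans (le_max_left _ _) hk)
    obtain ⟨l, s, p, hl1, hs, hp1, hp2, hkeq, hkle⟩ := hrep k hk1
    have hkN : NN r n (L0-1) < k := by
      have := le_trans (le_max_left _ _) hk; omega
    have hlL : L0 ≤ l := by
      by_contra h
      push_neg at h
      have := hNmono l (L0-1) (by omega)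
      omega
    have hl2 : 2 ≤ l := le_trans (by omega) hlL
    -- master sum formulas
    have hSb := master n hmono r m hm' b l hl1 s p hs hp1 hp2
    have hSa := master n hmono r m hm' a l hl1 s p hs hp1 hp2
    rw [← hkeq] at hSb hSa
    simp only [hfold, hfoldb] at hSa hSb
    show |(∑ i ∈ Finset.Icc 1 k, b (m i)) / (∑ i ∈ Finset.Icc 1 k, a (m i)) - α| < ε
    set Sa : ℝ := ∑ i ∈ Finset.Icc 1 k, a (m i) with hSa_def
    set Sb : ℝ := ∑ i ∈ Finset.Icc 1 k, b (m i) with hSb_def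
    set Xa : ℝ := ∑ j ∈ Finset.Icc 1 (l-1), (r j : ℝ) * A j with hXa_def
    set Xb : ℝ := ∑ j ∈ Finset.Icc 1 (l-1), (r j : ℝ) * B j with hXb_def
    set Pa : ℝ := ∑ i ∈ Finset.Ioc (n (l-1)) (n (l-1) + p), a i with hPa_def
    set Pb : ℝ := ∑ i ∈ Finset.Ioc (n (l-1)) (n (l-1) + p), b i with hPb_def
    -- basic positivity
    have hPa0 : (0:ℝ) ≤ Pa :=
      Finset.sum_nonneg fun i hi => hanonneg i (by
        have := (Finset.mem_Ioc.1 hi).1; omega)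
    have hPaA : Pa ≤ A l := by
      rw [hPa_def, ← hfold l]
      apply Finset.sum_le_sum_of_subset_of_nonneg
      · apply Finset.Ioc_subset_Ioc_right
        have := hmono (show l - 1 < l by omega); omega
      · intro i hi _
        exact hanonneg i (by have := (Finset.mem_Ioc.1 hi).1; omega)
    have hXa0 : (0:ℝ) ≤ Xa :=
      Finset.sum_nonneg fun j hj => mul_nonneg (Nat.cast_nonneg _)
        (hApos j (Finset.mem_Icc.1 hj).1).le
    have hAl : (0:ℝ) < A l := hApos l hl1
    have hsA0 : (0:ℝ) ≤ (s:ℝ) * A l := mul_nonneg (Nat.cast_nonneg _) hAl.le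
    -- lower bound on Sa
    have hSa_lb : (k:ℝ) * ε₀ ≤ Sa := by
      have hcs := Finset.card_nsmul_le_sum (Finset.Icc 1 k) (fun i => a (m i)) ε₀
        (fun i hi => ha (m i) (hm1 i (Finset.mem_Icc.1 hi).1))
      rw [Nat.card_Icc] at hcs
      simpa [nsmul_eq_mul] using hcs
    have hSapos : (0:ℝ) < Sa := by
      have : (1:ℝ) ≤ (k:ℝ) := by exact_mod_cast hk1
      nlinarith
    -- bound on the main weighted sum
    have hXdiff : Xb - α * Xa = ∑ j ∈ Finset.Icc 1 (l-1), (r j : ℝ) * (B j - α * A j) := by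
      rw [hXa_def, hXb_def, Finset.mul_sum, ← Finset.sum_sub_distrib]
      exact Finset.sum_congr rfl fun j _ => by ring
    have hT : |Xb - α * Xa| ≤ C + ε/3 * Xa := by
      rw [hXdiff]
      calc |∑ j ∈ Finset.Icc 1 (l-1), (r j : ℝ) * (B j - α * A j)|
          ≤ ∑ j ∈ Finset.Icc 1 (l-1), |(r j : ℝ) * (B j - α * A j)| :=
            Finset.abs_sum_le_sum_abs _ _
        _ = ∑ j ∈ Finset.Icc 1 (l-1), (r j : ℝ) * |B j - α * A j| := by
            refine Finset.sum_congr rfl fun j _ => ?_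
            rw [abs_mul, abs_of_nonneg (Nat.cast_nonneg _)]
        _ ≤ C + ε/3 * Xa := ?_
      rw [show Finset.Icc 1 (l-1) = Finset.Ioc 0 (l-1) from Finset.Icc_add_one_left_eq_Ioc 0 _,
        ← Finset.sum_Ioc_consecutive (fun j => (r j : ℝ) * |B j - α * A j|)
          (Nat.zero_le (L0-1)) (show L0 - 1 ≤ l - 1 by omega)]
      have hfirst : ∑ j ∈ Finset.Ioc 0 (L0-1), (r j : ℝ) * |B j - α * A j| = C := by
        rw [hC_def, show Finset.Icc 1 (L0-1) = Finset.Ioc 0 (L0-1) from Finset.Icc_add_one_left_eq_Ioc 0 _]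
      have hsecond : ∑ j ∈ Finset.Ioc (L0-1) (l-1), (r j : ℝ) * |B j - α * A j|
          ≤ ε/3 * Xa := by
        calc ∑ j ∈ Finset.Ioc (L0-1) (l-1), (r j : ℝ) * |B j - α * A j|
            ≤ ∑ j ∈ Finset.Ioc (L0-1) (l-1), ε/3 * ((r j : ℝ) * A j) := by
              refine Finset.sum_le_sum fun j hj => ?_
              obtain ⟨hj1, hj2⟩ := Finset.mem_Ioc.1 hj
              have hjJ : J1 + 1 ≤ j := by omega
              have := hΔ j hjJ
              have hr0 : (0:ℝ) ≤ (r j : ℝ) := Nat.cast_nonneg _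
              calc (r j : ℝ) * |B j - α * A j| ≤ (r j : ℝ) * (ε/3 * A j) :=
                    mul_le_mul_of_nonneg_left this hr0
                _ = ε/3 * ((r j : ℝ) * A j) := by ring
          _ = ε/3 * ∑ j ∈ Finset.Ioc (L0-1) (l-1), (r j : ℝ) * A j := by
              rw [Finset.mul_sum]
          _ ≤ ε/3 * Xa := by
              apply mul_le_mul_of_nonneg_left _ (le_of_lt hε')
              rw [hXa_def, show Finset.Icc 1 (l-1) = Finset.Ioc 0 (l-1) from
                Finset.Icc_add_one_left_eq_Ioc 0 _]
              apply Finset.sum_le_sum_of_subset_of_nonneg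
              · exact Finset.Ioc_subset_Ioc_left (Nat.zero_le _)
              · intro j hj _
                exact mul_nonneg (Nat.cast_nonneg _)
                  (hApos j (by have := (Finset.mem_Ioc.1 hj).1; omega)).le
      linarith [hfirst, hsecond]
    -- bound on the s-term
    have hsl : |(s:ℝ) * B l - α * ((s:ℝ) * A l)| ≤ ε/3 * ((s:ℝ) * A l) := by
      have h1 := hΔ l (by omega)
      have h2 : (0:ℝ) ≤ (s:ℝ) := Nat.cast_nonneg _
      calc |(s:ℝ) * B l - α * ((s:ℝ) * A l)| = (s:ℝ) * |B l - α * A l| := by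
            rw [show (s:ℝ) * B l - α * ((s:ℝ) * A l) = (s:ℝ) * (B l - α * A l) from by ring,
              abs_mul, abs_of_nonneg h2]
        _ ≤ (s:ℝ) * (ε/3 * A l) := mul_le_mul_of_nonneg_left h1 h2
        _ = ε/3 * ((s:ℝ) * A l) := by ring
    -- bound on the partial block term
    have hPb_abs : |Pb| ≤ M' * Pa := by
      calc |Pb| ≤ ∑ i ∈ Finset.Ioc (n (l-1)) (n (l-1) + p), |b i| :=
            Finset.abs_sum_le_sum_abs _ _
        _ ≤ ∑ i ∈ Finset.Ioc (n (l-1)) (n (l-1) + p), M' * a i := by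
            refine Finset.sum_le_sum fun i hi => hM' i ?_
            have := (Finset.mem_Ioc.1 hi).1; omega
        _ = M' * Pa := by rw [hPa_def, Finset.mul_sum]
    have hXa_single : (r (l-1) : ℝ) * A (l-1) ≤ Xa := by
      rw [hXa_def]
      apply Finset.single_le_sum (f := fun j => (r j : ℝ) * A j)
      · intro j hj
        exact mul_nonneg (Nat.cast_nonneg _) (hApos j (Finset.mem_Icc.1 hj).1).le
      · exact Finset.mem_Icc.2 ⟨by omega, le_rfl⟩
    have hP : |Pb - α * Pa| ≤ ε/3 * Xa := by
      have h1 : |Pb - α * Pa| ≤ (M' + |α|) * Pa := by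
        calc |Pb - α * Pa| ≤ |Pb| + |α * Pa| := abs_sub _ _
          _ = |Pb| + |α| * Pa := by rw [abs_mul, abs_of_nonneg hPa0]
          _ ≤ M' * Pa + |α| * Pa := by linarith [hPb_abs]
          _ = (M' + |α|) * Pa := by ring
      have h2 : (M' + |α|) * Pa ≤ (M' + |α|) * A l :=
        mul_le_mul_of_nonneg_left hPaA (by positivity)
      have h3 := hsm l (by omega)
      have h4 : ε/3 * ((r (l-1) : ℝ) * A (l-1)) ≤ ε/3 * Xa :=
        mul_le_mul_of_nonneg_left hXa_single (le_of_lt hε')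
      linarith
    -- assemble
    have hdecomp : Sb - α * Sa = (Xb - α * Xa) + ((s:ℝ) * B l - α * ((s:ℝ) * A l))
        + (Pb - α * Pa) := by
      rw [hSa, hSb]; ring
    have hnum : |Sb - α * Sa| ≤ C + 2 * (ε/3) * Sa := by
      have habs : |Sb - α * Sa| ≤ |Xb - α * Xa| + |(s:ℝ) * B l - α * ((s:ℝ) * A l)|
          + |Pb - α * Pa| := by
        rw [hdecomp]
        calc |(Xb - α * Xa) + ((s:ℝ) * B l - α * ((s:ℝ) * A l)) + (Pb - α * Pa)|
            ≤ |(Xb - α * Xa) + ((s:ℝ) * B l - α * ((s:ℝ) * A l))| + |Pb - α * Pa| :=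
              abs_add_le _ _
          _ ≤ _ := by linarith [abs_add_le (Xb - α * Xa) ((s:ℝ) * B l - α * ((s:ℝ) * A l))]
      have hXaSa : Xa + (s:ℝ) * A l ≤ Sa := by rw [hSa]; linarith
      have hXaSa2 : Xa ≤ Sa := by linarith
      have e1 := mul_le_mul_of_nonneg_left hXaSa hε'.le
      have e2 := mul_le_mul_of_nonneg_left hXaSa2 hε'.le
      linarith [hT, hsl, hP]
    -- conclude
    have hkC : C < ε₀ * (ε/3) * k := by
      have hkK : (⌈C/(ε₀*(ε/3))⌉₊ + 1 : ℕ) ≤ k := le_trans (le_max_right _ _) hk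
      have h1 : C/(ε₀*(ε/3)) ≤ (⌈C/(ε₀*(ε/3))⌉₊ : ℝ) := Nat.le_ceil _
      have h2 : ((⌈C/(ε₀*(ε/3))⌉₊ : ℕ) : ℝ) + 1 ≤ (k:ℝ) := by exact_mod_cast hkK
      have h3 : C/(ε₀*(ε/3)) < (k:ℝ) := by linarith
      rw [div_lt_iff₀ (by positivity)] at h3
      nlinarith
    have hCSa : C < ε/3 * Sa := by nlinarith
    rw [show Sb / Sa - α = (Sb - α * Sa) / Sa from by field_simp,
      abs_div, abs_of_pos hSapos, div_lt_iff₀ hSapos]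
    calc |Sb - α * Sa| ≤ C + 2 * (ε/3) * Sa := hnum
      _ < ε/3 * Sa + 2 * (ε/3) * Sa := by linarith
      _ = ε * Sa := by ring
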